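/- Let H = {(z₁,z₂) ∈ ℂ² : Re z₁ > 0, Re z₂ > 0} and let Ω ⊂ ℂ² be an open convex set with 0 ∈ ∂Ω such that the real hyperplanes {Re z_j = 0} support Ω at 0 for j = 1,2 and Ω ⊂ {Re z₁ > 0} ∩ {Re z₂ > 0}, with the additional property that for each j, n·Ω_j → {Re z_j > 0} in the local Hausdorff topology for strongly convex Ω_j ⊃ Ω with smooth boundary tangent to {Re z_j = 0} at 0. Then the dilates n·(Ω₁ ∩ Ω₂) converge in the local Hausdorff topology to H, and ∂H contains a nontrivial complex affine disc (e.g., {(1, it) : |t| < 1} after an affine change translating to the boundary face {Re z₁ = 0}). -/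

import Mathlib

open Pointwise

/-- Convergence of sets in `ℂ²` in the local Hausdorff topology. -/
def LocalHausdorffTendsto (A : ℕ → Set (ℂ × ℂ)) (B : Set (ℂ × ℂ)) : Prop :=
  ∀ R : ℝ, 0 < R →
    Filter.Tendsto
      (fun n => Metric.hausdorffDist (closure (A n ∩ Metric.ball 0 R))
        (closure (B ∩ Metric.ball 0 R)))
      Filter.atTop (nhds 0)

section Aux

variable {E : Type*} [NormedAddCommGroup E] [NormedSpace ℝ E]

/-- Quantitative separation: if a whole closed ball around `y` lies within
distance `ε < r` of a convex set `K`, then `y` is in the closure of `K`. -/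
lemma aux_sep {K : Set E} (hK : Convex ℝ K) (hKne : K.Nonempty) {y : E} {r ε : ℝ}
    (hr : 0 < r) (hεr : ε < r)
    (h : ∀ z ∈ Metric.closedBall y r, Metric.infDist z K ≤ ε) : y ∈ closure K := by
  by_contra hy
  obtain ⟨f, u, hfa, hfy⟩ :=
    geometric_hahn_banach_closed_point hK.closure isClosed_closure hy
  have hε0 : 0 ≤ ε :=
    le_trans Metric.infDist_nonneg (h y (Metric.mem_closedBall_self hr.le))
  set c : ℝ := (ε + r) / 2 with hc
  have hεc : ε < c := by simp only [hc]; linarith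
  have hcr : c < r := by simp only [hc]; linarith
  have hc0 : 0 < c := lt_of_le_of_lt hε0 hεc
  obtain ⟨a₀, ha₀⟩ := hKne
  have hf0 : f ≠ 0 := by
    intro h0
    have h1 := hfa a₀ (subset_closure ha₀)
    rw [h0] at h1 hfy
    simp at h1 hfy
    linarith
  have hnf : 0 < ‖f‖ := by
    rcases (norm_nonneg f).lt_or_eq with h' | h'
    · exact h'
    · exact absurd (ContinuousLinearMap.opNorm_zero_iff f |>.mp h'.symm) hf0
  -- find v with ‖v‖ ≤ r and c * ‖f‖ < f v
  have hlt : ¬ ‖f‖ ≤ (c / r) * ‖f‖ := by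
    have : (c / r) * ‖f‖ < 1 * ‖f‖ := by
      apply mul_lt_mul_of_pos_right _ hnf
      rw [div_lt_one hr]; exact hcr
    simpa using this.trans_le (le_of_eq (one_mul _))
  have hex : ∃ x : E, (c / r) * ‖f‖ * ‖x‖ < ‖f x‖ := by
    by_contra hco
    push_neg at hco
    exact hlt (f.opNorm_le_bound (by positivity) hco)
  obtain ⟨x, hx⟩ := hex
  have hx0 : x ≠ 0 := by
    intro h0; rw [h0] at hx; simp at hx
  have hnx : 0 < ‖x‖ := norm_pos_iff.mpr hx0
  set w : E := (r / ‖x‖) • x with hw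
  have hnw : ‖w‖ = r := by
    rw [hw, norm_smul, Real.norm_eq_abs, abs_of_pos (by positivity)]
    field_simp
  have hfw : c * ‖f‖ < ‖f w‖ := by
    rw [hw, map_smul, norm_smul, Real.norm_eq_abs, abs_of_pos (by positivity)]
    have heq : (r / ‖x‖) * ((c / r) * ‖f‖ * ‖x‖) = c * ‖f‖ := by
      field_simp
    calc c * ‖f‖ = (r / ‖x‖) * ((c / r) * ‖f‖ * ‖x‖) := heq.symm
    _ < (r / ‖x‖) * ‖f x‖ := mul_lt_mul_of_pos_left hx (by positivity)
  set v : E := if 0 ≤ f w then w else -w with hv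
  have hnv : ‖v‖ = r := by rw [hv]; split_ifs <;> simpa using hnw
  have hfv : c * ‖f‖ < f v := by
    rw [hv]; split_ifs with h'
    · exact hfw.trans_le (le_of_eq (by rw [Real.norm_eq_abs, abs_of_nonneg h']))
    · push_neg at h'
      exact hfw.trans_le (le_of_eq (by rw [Real.norm_eq_abs, abs_of_neg h', map_neg]))
  have hz : y + v ∈ Metric.closedBall y r := by
    simp [dist_eq_norm, hnv]
  have hid : Metric.infDist (y + v) K ≤ ε := h _ hz
  have hid' : Metric.infDist (y + v) K < c := lt_of_le_of_lt hid hεc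
  obtain ⟨a, haK, hda⟩ := (Metric.infDist_lt_iff ⟨a₀, ha₀⟩).mp hid'
  -- contradiction
  have h1 : f (y + v) - f a ≤ ‖f‖ * dist (y + v) a := by
    calc f (y + v) - f a = f (y + v - a) := by rw [map_sub]
    _ ≤ ‖f (y + v - a)‖ := le_abs_self _
    _ ≤ ‖f‖ * ‖y + v - a‖ := f.le_opNorm _
    _ = ‖f‖ * dist (y + v) a := by rw [dist_eq_norm]
  have h2 : f a < u := hfa a (subset_closure haK)
  have h3 : u < f y := hfy
  have h4 : f (y + v) = f y + f v := map_add f y v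
  nlinarith [mul_lt_mul_of_pos_left hda hnf]

/-- An open convex set absorbs the interior of its closure. -/
lemma aux_interior_closure {s : Set E} (hs : Convex ℝ s) (ho : IsOpen s)
    {x₀ : E} (hx₀ : x₀ ∈ s) {y : E} (hy : y ∈ interior (closure s)) : y ∈ s := by
  obtain ⟨ρ, hρ, hball⟩ := Metric.isOpen_iff.mp isOpen_interior y hy
  set ε : ℝ := ρ / (2 * (‖y - x₀‖ + 1)) with hε
  have hε0 : 0 < ε := by positivity
  set y' : E := y + ε • (y - x₀) with hy'
  have hy'mem : y' ∈ closure s := by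
    apply interior_subset
    apply hball
    rw [Metric.mem_ball, dist_eq_norm]
    have : y' - y = ε • (y - x₀) := by rw [hy']; abel
    rw [this, norm_smul, Real.norm_eq_abs, abs_of_pos hε0]
    have hN : (0:ℝ) < ‖y - x₀‖ + 1 := by positivity
    have heq : ε * (‖y - x₀‖ + 1) = ρ / 2 := by rw [hε]; field_simp
    nlinarith [norm_nonneg (y - x₀)]
  have hcombo : (ε / (1 + ε)) • x₀ + (1 / (1 + ε)) • y' = y := by
    rw [hy']
    match_scalars <;> (field_simp; try ring)
  have := hs.combo_interior_closure_mem_interior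
    (x := x₀) (y := y') (by rwa [ho.interior_eq]) hy'mem
    (a := ε / (1 + ε)) (b := 1 / (1 + ε)) (by positivity) (by positivity)
    (by field_simp; ring)
  rw [hcombo, ho.interior_eq] at this
  exact this

/-- Key factor lemma: if a convex set `K` is Hausdorff-close (within radius `R'`) to the
half space `{0 < g}` for a 1-Lipschitz `g`, then any point with `g`-margin `δ` lies in
the closure of `K`. -/
lemma aux_factor (K : Set (ℂ × ℂ)) (hKc : Convex ℝ K) (hKne : K.Nonempty)
    (g : ℂ × ℂ → ℝ) (hg : ∀ a b : ℂ × ℂ, |g a - g b| ≤ dist a b)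
    (R' δ : ℝ) (hδ : 0 < δ)
    (hhd : Metric.hausdorffDist (closure (K ∩ Metric.ball 0 R'))
      (closure ({p : ℂ × ℂ | 0 < g p} ∩ Metric.ball 0 R')) < δ / 4)
    (hne' : ({p : ℂ × ℂ | 0 < g p} ∩ Metric.ball 0 R').Nonempty)
    (hKne' : (K ∩ Metric.ball 0 R').Nonempty)
    (y : ℂ × ℂ) (hy : δ < g y) (hyR : ‖y‖ + δ / 2 < R') : y ∈ closure K := by
  apply aux_sep hKc hKne (r := δ / 2) (ε := δ / 4) (by positivity) (by linarith)
  intro z hz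
  have hdzy : dist z y ≤ δ / 2 := Metric.mem_closedBall.mp hz
  have hzg : 0 < g z := by
    have h1 := hg z y
    have h2 := abs_le.mp h1
    linarith [h2.1]
  have hzball : z ∈ Metric.ball (0 : ℂ × ℂ) R' := by
    rw [mem_ball_zero_iff]
    have h1 : ‖z‖ ≤ ‖y‖ + ‖z - y‖ := norm_le_insert' _ _
    rw [← dist_eq_norm] at h1
    linarith
  have hbd1 : Bornology.IsBounded (closure (K ∩ Metric.ball (0:ℂ × ℂ) R')) :=
    (Metric.isBounded_ball.subset Set.inter_subset_right).closure
  have hbd2 : Bornology.IsBounded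
      (closure ({p : ℂ × ℂ | 0 < g p} ∩ Metric.ball 0 R')) :=
    (Metric.isBounded_ball.subset Set.inter_subset_right).closure
  have hfin : EMetric.hausdorffEdist
      (closure ({p : ℂ × ℂ | 0 < g p} ∩ Metric.ball 0 R'))
      (closure (K ∩ Metric.ball (0:ℂ × ℂ) R')) ≠ ⊤ :=
    Metric.hausdorffEdist_ne_top_of_nonempty_of_bounded hne'.closure hKne'.closure hbd2 hbd1
  have h5 : Metric.infDist z (closure (K ∩ Metric.ball (0:ℂ × ℂ) R')) ≤ δ / 4 := by
    have hle := Metric.infDist_le_infDist_add_hausdorffDist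
      (x := z) (s := closure ({p : ℂ × ℂ | 0 < g p} ∩ Metric.ball 0 R'))
      (t := closure (K ∩ Metric.ball (0:ℂ × ℂ) R')) hfin
    have hz0 : Metric.infDist z (closure ({p : ℂ × ℂ | 0 < g p} ∩ Metric.ball 0 R')) = 0 :=
      Metric.infDist_zero_of_mem (subset_closure ⟨hzg, hzball⟩)
    rw [hz0, zero_add, Metric.hausdorffDist_comm] at hle
    linarith
  calc Metric.infDist z K = Metric.infDist z (closure K) := Metric.infDist_closure.symm
  _ ≤ Metric.infDist z (closure (K ∩ Metric.ball (0:ℂ × ℂ) R')) :=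
      Metric.infDist_le_infDist_of_subset (closure_mono Set.inter_subset_left) hKne'.closure
  _ ≤ δ / 4 := h5

end Aux

/-- the blow-up computation of Example 3.6. If `Ω ⊆ Ω₁ ∩ Ω₂` where each
`Ω_j` is a bounded convex domain with `0 ∈ ∂Ω_j`, `Ω_j ⊆ {Re z_j > 0}`, and
`n·Ω_j → {Re z_j > 0}` in the local Hausdorff topology, then
`n·(Ω₁ ∩ Ω₂) → H = {Re z₁ > 0, Re z₂ > 0}` and `∂H` contains a nontrivial complex
affine disc. -/
theorem stmt_14 (Ω Ω₁ Ω₂ : Set (ℂ × ℂ))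
    (hΩopen : IsOpen Ω) (hΩconv : Convex ℝ Ω) (hΩne : Ω.Nonempty)
    (hΩ0 : (0 : ℂ × ℂ) ∈ frontier Ω)
    (hΩH : Ω ⊆ {p : ℂ × ℂ | 0 < p.1.re ∧ 0 < p.2.re})
    (h₁open : IsOpen Ω₁) (h₁conv : Convex ℝ Ω₁) (h₁bd : Bornology.IsBounded Ω₁)
    (h₂open : IsOpen Ω₂) (h₂conv : Convex ℝ Ω₂) (h₂bd : Bornology.IsBounded Ω₂)
    (hsub₁ : Ω ⊆ Ω₁) (hsub₂ : Ω ⊆ Ω₂)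
    (h₁0 : (0 : ℂ × ℂ) ∈ frontier Ω₁) (h₂0 : (0 : ℂ × ℂ) ∈ frontier Ω₂)
    (h₁half : Ω₁ ⊆ {p : ℂ × ℂ | 0 < p.1.re}) (h₂half : Ω₂ ⊆ {p : ℂ × ℂ | 0 < p.2.re})
    (hlim₁ : LocalHausdorffTendsto (fun n => (n : ℝ) • Ω₁) {p : ℂ × ℂ | 0 < p.1.re})
    (hlim₂ : LocalHausdorffTendsto (fun n => (n : ℝ) • Ω₂) {p : ℂ × ℂ | 0 < p.2.re}) :
    LocalHausdorffTendsto (fun n => (n : ℝ) • (Ω₁ ∩ Ω₂))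
        {p : ℂ × ℂ | 0 < p.1.re ∧ 0 < p.2.re} ∧
    ∃ (p v : ℂ × ℂ), v ≠ 0 ∧ ∀ t : ℂ, ‖t‖ < 1 →
      p + t • v ∈ frontier {q : ℂ × ℂ | 0 < q.1.re ∧ 0 < q.2.re} := by
  classical
  have hΩ₁ne : Ω₁.Nonempty := hΩne.mono hsub₁
  have hΩ₂ne : Ω₂.Nonempty := hΩne.mono hsub₂
  have h₁cl : (0 : ℂ × ℂ) ∈ closure Ω₁ := frontier_subset_closure h₁0
  have h₂cl : (0 : ℂ × ℂ) ∈ closure Ω₂ := frontier_subset_closure h₂0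
  -- Lipschitz bounds for the real parts
  have hg₁ : ∀ a b : ℂ × ℂ, |a.1.re - b.1.re| ≤ dist a b := by
    intro a b
    have h1 : |a.1.re - b.1.re| = |(a.1 - b.1).re| := by rw [Complex.sub_re]
    rw [h1]
    calc |(a.1 - b.1).re| ≤ ‖a.1 - b.1‖ := Complex.abs_re_le_norm _
    _ = dist a.1 b.1 := (Complex.dist_eq _ _).symm
    _ ≤ dist a b := by rw [Prod.dist_eq]; exact le_max_left _ _
  have hg₂ : ∀ a b : ℂ × ℂ, |a.2.re - b.2.re| ≤ dist a b := by
    intro a b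
    have h1 : |a.2.re - b.2.re| = |(a.2 - b.2).re| := by rw [Complex.sub_re]
    rw [h1]
    calc |(a.2 - b.2).re| ≤ ‖a.2 - b.2‖ := Complex.abs_re_le_norm _
    _ = dist a.2 b.2 := (Complex.dist_eq _ _).symm
    _ ≤ dist a b := by rw [Prod.dist_eq]; exact le_max_right _ _
  constructor
  · -- the local Hausdorff convergence
    intro R hR
    rw [NormedAddCommGroup.tendsto_nhds_zero]
    intro ε hε
    set t : ℝ := min (ε / (4 * R)) (1 / 2) with htdef
    have ht0 : 0 < t := lt_min (by positivity) one_half_pos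
    have ht2 : t ≤ 1 / 2 := min_le_right _ _
    have htε : t * (2 * R) ≤ ε / 2 := by
      have h1 : t ≤ ε / (4 * R) := min_le_left _ _
      have h2 : (ε / (4 * R)) * (2 * R) = ε / 2 := by field_simp; ring
      nlinarith
    set δ : ℝ := t * R / 8 with hδdef
    have hδ0 : 0 < δ := by positivity
    set R' : ℝ := R + 1 + δ with hR'def
    have hR'0 : 0 < R' := by positivity
    -- the nonemptiness facts needed at radius R'
    have hHne₁ : ({p : ℂ × ℂ | 0 < p.1.re} ∩ Metric.ball 0 R').Nonempty := by
      refine ⟨(((R' / 2 : ℝ) : ℂ), 0), ?_, ?_⟩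
      · simp only [Set.mem_setOf_eq, Complex.ofReal_re]
        positivity
      · rw [mem_ball_zero_iff, Prod.norm_def]
        have h1 : ‖((R' / 2 : ℝ) : ℂ)‖ = R' / 2 := by
          rw [Complex.norm_real, Real.norm_eq_abs, abs_of_pos (by positivity)]
        rw [norm_zero, h1, max_eq_left (by positivity)]
        linarith
    have hHne₂ : ({p : ℂ × ℂ | 0 < p.2.re} ∩ Metric.ball 0 R').Nonempty := by
      refine ⟨(0, ((R' / 2 : ℝ) : ℂ)), ?_, ?_⟩
      · simp only [Set.mem_setOf_eq, Complex.ofReal_re]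
        positivity
      · rw [mem_ball_zero_iff, Prod.norm_def]
        have h1 : ‖((R' / 2 : ℝ) : ℂ)‖ = R' / 2 := by
          rw [Complex.norm_real, Real.norm_eq_abs, abs_of_pos (by positivity)]
        rw [norm_zero, h1, max_eq_right (by positivity)]
        linarith
    -- key eventual statement
    have key : ∀ᶠ n : ℕ in Filter.atTop, ∀ y : ℂ × ℂ,
        δ < y.1.re → δ < y.2.re → ‖y‖ < R + 1 → y ∈ (n : ℝ) • (Ω₁ ∩ Ω₂) := by
      filter_upwards [(hlim₁ R' hR'0).eventually_lt_const (show (0:ℝ) < δ / 4 by positivity),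
        (hlim₂ R' hR'0).eventually_lt_const (show (0:ℝ) < δ / 4 by positivity),
        Filter.eventually_ge_atTop 1] with n hhd₁ hhd₂ hn1
      have hn0 : (0 : ℝ) < (n : ℝ) := by exact_mod_cast Nat.lt_of_lt_of_le Nat.zero_lt_one hn1
      have hnne : ((n : ℝ)) ≠ 0 := ne_of_gt hn0
      set K : Set (ℂ × ℂ) := (n : ℝ) • Ω₁ with hKdef
      set L : Set (ℂ × ℂ) := (n : ℝ) • Ω₂ with hLdef
      have hKopen : IsOpen K := h₁open.smul₀ hnne
      have hLopen : IsOpen L := h₂open.smul₀ hnne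
      have hKconv : Convex ℝ K := h₁conv.smul _
      have hLconv : Convex ℝ L := h₂conv.smul _
      have hKnonempty : K.Nonempty := hΩ₁ne.smul_set
      have hLnonempty : L.Nonempty := hΩ₂ne.smul_set
      have hKcl : (0 : ℂ × ℂ) ∈ closure K := by
        have hmap := image_closure_subset_closure_image
          (f := fun x : ℂ × ℂ => (n : ℝ) • x) (s := Ω₁) (continuous_const_smul _)
        have h0 : (fun x : ℂ × ℂ => (n : ℝ) • x) 0 ∈
            closure ((fun x : ℂ × ℂ => (n : ℝ) • x) '' Ω₁) :=
          hmap ⟨0, h₁cl, rfl⟩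
        simpa [hKdef, Set.image_smul] using h0
      have hLcl : (0 : ℂ × ℂ) ∈ closure L := by
        have hmap := image_closure_subset_closure_image
          (f := fun x : ℂ × ℂ => (n : ℝ) • x) (s := Ω₂) (continuous_const_smul _)
        have h0 : (fun x : ℂ × ℂ => (n : ℝ) • x) 0 ∈
            closure ((fun x : ℂ × ℂ => (n : ℝ) • x) '' Ω₂) :=
          hmap ⟨0, h₂cl, rfl⟩
        simpa [hLdef, Set.image_smul] using h0
      have hKne' : (K ∩ Metric.ball (0:ℂ × ℂ) R').Nonempty := by
        obtain ⟨x, hxK, hxd⟩ := Metric.mem_closure_iff.mp hKcl R' hR'0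
        exact ⟨x, hxK, by rwa [Metric.mem_ball, dist_comm]⟩
      have hLne' : (L ∩ Metric.ball (0:ℂ × ℂ) R').Nonempty := by
        obtain ⟨x, hxL, hxd⟩ := Metric.mem_closure_iff.mp hLcl R' hR'0
        exact ⟨x, hxL, by rwa [Metric.mem_ball, dist_comm]⟩
      -- the δ-deep region at radius R+1
      set U : Set (ℂ × ℂ) := {z : ℂ × ℂ | (δ < z.1.re ∧ δ < z.2.re) ∧ ‖z‖ < R + 1} with hUdef
      have hUopen : IsOpen U := by
        apply IsOpen.and
        · apply IsOpen.and
          · exact isOpen_lt continuous_const (Complex.continuous_re.comp continuous_fst)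
          · exact isOpen_lt continuous_const (Complex.continuous_re.comp continuous_snd)
        · exact isOpen_lt continuous_norm continuous_const
      have hUK : U ⊆ closure K := by
        rintro z ⟨⟨hz1, _⟩, hzn⟩
        exact aux_factor K hKconv hKnonempty (fun p => p.1.re) hg₁ R' δ hδ0 hhd₁
          hHne₁ hKne' z hz1 (by simp only [hR'def]; linarith)
      have hUL : U ⊆ closure L := by
        rintro z ⟨⟨_, hz2⟩, hzn⟩
        exact aux_factor L hLconv hLnonempty (fun p => p.2.re) hg₂ R' δ hδ0 hhd₂
          hHne₂ hLne' z hz2 (by simp only [hR'def]; linarith)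
      intro y hy1 hy2 hyR
      have hyU : y ∈ U := ⟨⟨hy1, hy2⟩, hyR⟩
      obtain ⟨xK, hxK⟩ := hKnonempty
      obtain ⟨xL, hxL⟩ := hLnonempty
      have hyK : y ∈ K :=
        aux_interior_closure hKconv hKopen hxK
          (interior_maximal hUK hUopen hyU)
      have hyL : y ∈ L :=
        aux_interior_closure hLconv hLopen hxL
          (interior_maximal hUL hUopen hyU)
      rw [Set.smul_set_inter₀ hnne]
      exact ⟨hyK, hyL⟩
    -- conclude the Hausdorff distance bound
    filter_upwards [key, Filter.eventually_ge_atTop 1] with n hkey hn1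
    have hn0 : (0 : ℝ) < (n : ℝ) := by exact_mod_cast Nat.lt_of_lt_of_le Nat.zero_lt_one hn1
    have hdle : Metric.hausdorffDist
        (closure ((n : ℝ) • (Ω₁ ∩ Ω₂) ∩ Metric.ball 0 R))
        (closure ({p : ℂ × ℂ | 0 < p.1.re ∧ 0 < p.2.re} ∩ Metric.ball 0 R)) ≤ ε / 2 := by
      rw [Metric.hausdorffDist_closure]
      apply Metric.hausdorffDist_le_of_mem_dist (by positivity)
      · rintro x ⟨hx, hxb⟩
        refine ⟨x, ⟨?_, hxb⟩, by rw [dist_self]; positivity⟩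
        obtain ⟨w, hw, rfl⟩ := hx
        refine ⟨?_, ?_⟩
        · show (0:ℝ) < ((n : ℝ) • w).1.re
          have : ((n : ℝ) • w).1 = (n : ℝ) • w.1 := rfl
          rw [this, Complex.smul_re]
          exact mul_pos hn0 (h₁half hw.1)
        · show (0:ℝ) < ((n : ℝ) • w).2.re
          have : ((n : ℝ) • w).2 = (n : ℝ) • w.2 := rfl
          rw [this, Complex.smul_re]
          exact mul_pos hn0 (h₂half hw.2)
      · rintro y ⟨⟨hy1, hy2⟩, hyb⟩
        rw [mem_ball_zero_iff] at hyb
        set p₀ : ℂ × ℂ := (((R / 4 : ℝ) : ℂ), ((R / 4 : ℝ) : ℂ)) with hp₀def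
        have hp₀norm : ‖p₀‖ = R / 4 := by
          rw [hp₀def, Prod.norm_def]
          have h1 : ‖((R / 4 : ℝ) : ℂ)‖ = R / 4 := by
            rw [Complex.norm_real, Real.norm_eq_abs, abs_of_pos (by positivity)]
          rw [h1, max_self]
        set y' : ℂ × ℂ := y + t • (p₀ - y) with hy'def
        have hre1 : y'.1.re = (1 - t) * y.1.re + t * (R / 4) := by
          rw [hy'def]
          show (y.1 + t • (p₀.1 - y.1)).re = _
          rw [Complex.add_re, Complex.smul_re, Complex.sub_re]
          have : p₀.1.re = R / 4 := by rw [hp₀def]; exact Complex.ofReal_re _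
          rw [this, smul_eq_mul]; ring
        have hre2 : y'.2.re = (1 - t) * y.2.re + t * (R / 4) := by
          rw [hy'def]
          show (y.2 + t • (p₀.2 - y.2)).re = _
          rw [Complex.add_re, Complex.smul_re, Complex.sub_re]
          have : p₀.2.re = R / 4 := by rw [hp₀def]; exact Complex.ofReal_re _
          rw [this, smul_eq_mul]; ring
        have hδ1 : δ < y'.1.re := by
          rw [hre1, hδdef]
          linarith [mul_pos ht0 hR,
            mul_nonneg (by linarith : (0:ℝ) ≤ 1 - t) hy1.le]
        have hδ2 : δ < y'.2.re := by
          rw [hre2, hδdef]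
          linarith [mul_pos ht0 hR,
            mul_nonneg (by linarith : (0:ℝ) ≤ 1 - t) hy2.le]
        have hy'eq : y' = (1 - t) • y + t • p₀ := by
          rw [hy'def]; match_scalars <;> ring
        have hy'norm : ‖y'‖ < R := by
          rw [hy'eq]
          calc ‖(1 - t) • y + t • p₀‖ ≤ ‖(1 - t) • y‖ + ‖t • p₀‖ := norm_add_le _ _
          _ = (1 - t) * ‖y‖ + t * (R / 4) := by
              rw [norm_smul, norm_smul, Real.norm_eq_abs, Real.norm_eq_abs,
                abs_of_pos ht0, abs_of_pos (by linarith : (0:ℝ) < 1 - t), hp₀norm]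
          _ < R := by
              linarith [mul_lt_mul_of_pos_left hyb (show (0:ℝ) < 1 - t by linarith),
                mul_pos ht0 hR]
        have hy'mem : y' ∈ (n : ℝ) • (Ω₁ ∩ Ω₂) :=
          hkey y' hδ1 hδ2 (by linarith)
        refine ⟨y', ⟨hy'mem, mem_ball_zero_iff.mpr hy'norm⟩, ?_⟩
        have : dist y y' = t * ‖p₀ - y‖ := by
          rw [dist_eq_norm, hy'def]
          have h1 : y - (y + t • (p₀ - y)) = (-t) • (p₀ - y) := by
            match_scalars <;> ring
          rw [h1, norm_smul, Real.norm_eq_abs, abs_neg, abs_of_pos ht0]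
        rw [this]
        have h2 : ‖p₀ - y‖ ≤ ‖p₀‖ + ‖y‖ := norm_sub_le _ _
        have h3 : ‖p₀ - y‖ ≤ 2 * R := by
          rw [hp₀norm] at h2
          linarith
        linarith [mul_le_mul_of_nonneg_left h3 ht0.le, htε]
    have hnn : (0:ℝ) ≤ Metric.hausdorffDist
        (closure ((n : ℝ) • (Ω₁ ∩ Ω₂) ∩ Metric.ball 0 R))
        (closure ({p : ℂ × ℂ | 0 < p.1.re ∧ 0 < p.2.re} ∩ Metric.ball 0 R)) :=
      Metric.hausdorffDist_nonneg
    simp only [Real.norm_eq_abs, abs_of_nonneg hnn]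
    linarith
  · -- the complex affine disc in the boundary
    refine ⟨((0 : ℂ), (1 : ℂ)), ((0 : ℂ), Complex.I), ?_, ?_⟩
    · intro h
      have := congrArg Prod.snd h
      exact Complex.I_ne_zero this
    · intro t ht
      have hpt : ((0 : ℂ), (1 : ℂ)) + t • ((0 : ℂ), Complex.I) = (0, 1 + t * Complex.I) := by
        simp [Prod.ext_iff, smul_eq_mul]
      rw [hpt]
      have him : t.im < 1 := lt_of_le_of_lt (le_abs_self _) (lt_of_le_of_lt (Complex.abs_im_le_norm t) ht)
      have hre : (1 + t * Complex.I).re = 1 - t.im := by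
        simp [Complex.add_re, Complex.mul_re]; ring
      have hHopen : IsOpen {q : ℂ × ℂ | 0 < q.1.re ∧ 0 < q.2.re} := by
        apply IsOpen.and
        · exact isOpen_lt continuous_const (Complex.continuous_re.comp continuous_fst)
        · exact isOpen_lt continuous_const (Complex.continuous_re.comp continuous_snd)
      constructor
      · -- in the closure
        rw [Metric.mem_closure_iff]
        intro ε hε
        refine ⟨((((ε / 2 : ℝ)) : ℂ), 1 + t * Complex.I), ⟨?_, ?_⟩, ?_⟩
        · show (0:ℝ) < (((ε / 2 : ℝ) : ℂ)).re
          rw [Complex.ofReal_re]; positivity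
        · show (0:ℝ) < (1 + t * Complex.I).re
          rw [hre]; linarith
        · rw [Prod.dist_eq]
          have h2 : dist (1 + t * Complex.I) (1 + t * Complex.I) = 0 := dist_self _
          have h1 : dist (0 : ℂ) (((ε / 2 : ℝ) : ℂ)) = ε / 2 := by
            rw [Complex.dist_eq]
            have : (0 : ℂ) - ((ε / 2 : ℝ) : ℂ) = -(((ε / 2 : ℝ)) : ℂ) := by ring
            rw [this, norm_neg, Complex.norm_real, Real.norm_eq_abs, abs_of_pos (by positivity)]
          rw [h1, h2, max_eq_left (by positivity : (0:ℝ) ≤ ε / 2)]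
          linarith
      · -- not in the interior
        rw [hHopen.interior_eq]
        intro hmem
        have : (0:ℝ) < ((0 : ℂ)).re := hmem.1
        simp at this
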